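/- Let ψ solve on [x₀, ∞) the Volterra integral equation ψ(x) = g(x) + ∫ₓ^∞ K(x,y) ψ(y) dy, where |g(x)| ≤ A and |K(x,y)| ≤ h(y) for all x₀ ≤ x ≤ y with h : ℝ → [0,∞) integrable on [x₀,∞). If ψ is bounded and measurable, then |ψ(x)| ≤ A · exp(∫ₓ^∞ h(y) dy) for all x ≥ x₀. -/

import Mathlib

open MeasureTheory Complex
open scoped Nat


namespace VolterraGronwallAux

noncomputable def Hfun (x₀ : ℝ) (h : ℝ → ℝ) (x : ℝ) : ℝ := ∫ y in Set.Ioi (max x x₀), h y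

variable {x₀ : ℝ} {h : ℝ → ℝ}

lemma subset_Ici (x : ℝ) : Set.Ioi (max x x₀) ⊆ Set.Ici x₀ :=
  fun y hy => le_of_lt (lt_of_le_of_lt (le_max_right x x₀) hy)

lemma Hint (hh_int : IntegrableOn h (Set.Ici x₀)) (x : ℝ) :
    IntegrableOn h (Set.Ioi (max x x₀)) := hh_int.mono_set (subset_Ici x)

lemma Hint' (hh_int : IntegrableOn h (Set.Ici x₀)) {x : ℝ} (hx : x₀ ≤ x) :
    IntegrableOn h (Set.Ioi x) := by
  have := Hint hh_int x; rwa [max_eq_left hx] at this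

lemma H_eq {x : ℝ} (hx : x₀ ≤ x) : Hfun x₀ h x = ∫ y in Set.Ioi x, h y := by
  rw [Hfun, max_eq_left hx]

lemma H_nonneg (hh : ∀ y, 0 ≤ h y) (x : ℝ) : 0 ≤ Hfun x₀ h x :=
  setIntegral_nonneg measurableSet_Ioi fun y _ => hh y

lemma H_anti (hh : ∀ y, 0 ≤ h y) (hh_int : IntegrableOn h (Set.Ici x₀)) :
    Antitone (Hfun x₀ h) := by
  intro a b hab
  refine setIntegral_mono_set (Hint hh_int a)
    (Filter.Eventually.of_forall fun y => hh y) ?_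
  exact HasSubset.Subset.eventuallyLE (Set.Ioi_subset_Ioi (max_le_max hab le_rfl))

lemma H_meas (hh : ∀ y, 0 ≤ h y) (hh_int : IntegrableOn h (Set.Ici x₀)) :
    Measurable (Hfun x₀ h) := (H_anti hh hh_int).measurable

lemma hHpow_int (hh : ∀ y, 0 ≤ h y) (hh_int : IntegrableOn h (Set.Ici x₀))
    {x : ℝ} (hx : x₀ ≤ x) (n : ℕ) :
    IntegrableOn (fun y => h y * Hfun x₀ h y ^ n) (Set.Ioi x) := by
  have hint := Hint' hh_int hx
  refine Integrable.mono (hint.const_mul (Hfun x₀ h x₀ ^ n)) ?_ ?_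
  · exact hint.aestronglyMeasurable.mul
      ((H_meas hh hh_int).pow_const n).aestronglyMeasurable
  · rw [ae_restrict_iff' measurableSet_Ioi]
    refine Filter.Eventually.of_forall fun y hy => ?_
    have hy0 : x₀ ≤ y := hx.trans (le_of_lt hy)
    have h1 : Hfun x₀ h y ≤ Hfun x₀ h x₀ := H_anti hh hh_int hy0
    have h2 : (0:ℝ) ≤ Hfun x₀ h y := H_nonneg hh y
    have h3 : h y * Hfun x₀ h y ^ n ≤ Hfun x₀ h x₀ ^ n * h y := by
      rw [mul_comm]
      exact mul_le_mul_of_nonneg_right (pow_le_pow_left₀ h2 h1 n) (hh y)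
    rw [Real.norm_eq_abs, Real.norm_eq_abs,
      _root_.abs_of_nonneg (mul_nonneg (hh y) (pow_nonneg h2 n)),
      _root_.abs_of_nonneg (mul_nonneg (pow_nonneg (H_nonneg hh x₀) n) (hh y))]
    exact h3

lemma key (hh : ∀ y, 0 ≤ h y) (hh_int : IntegrableOn h (Set.Ici x₀)) :
    ∀ n : ℕ, ∀ x : ℝ, x₀ ≤ x →
      ∫ y in Set.Ioi x, h y * Hfun x₀ h y ^ n = Hfun x₀ h x ^ (n+1) / (n+1) := by
  intro n
  induction n with
  | zero =>
    intro x hx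
    simp [H_eq hx]
  | succ n ih =>
    intro x hx
    have hIoo : ∀ z, x < z → ∫ y in Set.Ioo x z, h y * Hfun x₀ h y ^ n
        = Hfun x₀ h x ^ (n+1) / (n+1) - Hfun x₀ h z ^ (n+1) / (n+1) := by
      intro z hz
      have hzx₀ : x₀ ≤ z := hx.trans (le_of_lt hz)
      have hdisj : Disjoint (Set.Ioo x z) (Set.Ici z) :=
        Set.disjoint_left.mpr fun y hy hy' => absurd hy.2 (not_lt.mpr hy')
      have hiOoo : IntegrableOn (fun y => h y * Hfun x₀ h y ^ n) (Set.Ioo x z) :=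
        (hHpow_int hh hh_int hx n).mono_set Set.Ioo_subset_Ioi_self
      have hiIci : IntegrableOn (fun y => h y * Hfun x₀ h y ^ n) (Set.Ici z) :=
        (hHpow_int hh hh_int hx n).mono_set fun y hy => lt_of_lt_of_le hz hy
      have hsplit := setIntegral_union hdisj measurableSet_Ici hiOoo hiIci
        (f := fun y => h y * Hfun x₀ h y ^ n) (μ := volume)
      rw [Set.Ioo_union_Ici_eq_Ioi hz] at hsplit
      rw [ih x hx] at hsplit
      rw [integral_Ici_eq_integral_Ioi, ih z hzx₀] at hsplit
      linarith
    set f : ℝ → ℝ := fun y => h y * Hfun x₀ h y ^ n with hfdef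
    set F : ℝ × ℝ → ℝ :=
      Set.indicator {q : ℝ × ℝ | q.1 < q.2} (fun q => f q.1 * h q.2) with hFdef
    have hFint : Integrable F
        ((volume.restrict (Set.Ioi x)).prod (volume.restrict (Set.Ioi x))) := by
      apply Integrable.indicator
      · exact (hHpow_int hh hh_int hx n).mul_prod (Hint' hh_int hx)
      · exact measurableSet_lt measurable_fst measurable_snd
    have hswap := integral_integral_swap (f := fun y z => F (y, z)) hFint
    have hleft : (∫ y in Set.Ioi x, ∫ z in Set.Ioi x, F (y, z))
        = ∫ y in Set.Ioi x, h y * Hfun x₀ h y ^ (n+1) := by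
      refine setIntegral_congr_fun measurableSet_Ioi fun y hy => ?_
      have hy' : x < y := hy
      have hy₀ : x₀ ≤ y := hx.trans (le_of_lt hy')
      have hind : (fun z => F (y, z)) = (Set.Ioi y).indicator (fun z => f y * h z) := by
        funext z
        by_cases hyz : y < z
        · simp [hFdef, Set.indicator_of_mem, hyz, Set.mem_Ioi]
        · simp [hFdef, Set.indicator_of_notMem, hyz, Set.mem_Ioi]
      rw [hind, setIntegral_indicator measurableSet_Ioi]
      have hinter : Set.Ioi x ∩ Set.Ioi y = Set.Ioi y := by
        rw [Set.Ioi_inter_Ioi, max_eq_right (le_of_lt hy')]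
      rw [hinter, integral_const_mul, ← H_eq hy₀, hfdef]
      ring
    have hright : (∫ z in Set.Ioi x, ∫ y in Set.Ioi x, F (y, z))
        = (Hfun x₀ h x ^ (n+1) / (n+1)) * Hfun x₀ h x
          - (1 / ((n:ℝ)+1)) * ∫ z in Set.Ioi x, h z * Hfun x₀ h z ^ (n+1) := by
      have hstep : (∫ z in Set.Ioi x, ∫ y in Set.Ioi x, F (y, z))
          = ∫ z in Set.Ioi x, ((Hfun x₀ h x ^ (n+1) / (n+1)) * h z
              - (1 / ((n:ℝ)+1)) * (h z * Hfun x₀ h z ^ (n+1))) := by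
        refine setIntegral_congr_fun measurableSet_Ioi fun z hz => ?_
        have hz' : x < z := hz
        have hind : (fun y => F (y, z)) = (Set.Iio z).indicator (fun y => f y * h z) := by
          funext y
          by_cases hyz : y < z
          · simp [hFdef, Set.indicator_of_mem, hyz, Set.mem_Iio]
          · simp [hFdef, Set.indicator_of_notMem, hyz, Set.mem_Iio]
        rw [hind, setIntegral_indicator measurableSet_Iio, Set.Ioi_inter_Iio,
          integral_mul_const, hIoo z hz']
        ring
      rw [hstep, integral_sub ((Hint' hh_int hx).const_mul _)
        (((hHpow_int hh hh_int hx (n+1))).const_mul _),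
        integral_const_mul, integral_const_mul, ← H_eq hx]
    rw [hleft, hright] at hswap
    have hne : ((n:ℝ)+1) ≠ 0 := by positivity
    have hne2 : ((n:ℝ)+2) ≠ 0 := by positivity
    have hpow : Hfun x₀ h x ^ (n+1) * Hfun x₀ h x = Hfun x₀ h x ^ (n+2) := by
      rw [← pow_succ]
    push_cast
    field_simp at hswap ⊢
    nlinarith [hswap, hpow]

end VolterraGronwallAux

/-- Backward Gronwall estimate for a Volterra integral equation on a half-line:
if `ψ(x) = g(x) + ∫ₓ^∞ K(x,y) ψ(y) dy` for `x ≥ x₀`, with `|g| ≤ A`,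
`|K(x,y)| ≤ h(y)` for `x₀ ≤ x ≤ y`, `h ≥ 0` integrable on `[x₀,∞)`, and `ψ`
bounded and measurable, then `|ψ(x)| ≤ A · exp(∫ₓ^∞ h)` for all `x ≥ x₀`. -/
theorem volterra_gronwall (x₀ A : ℝ) (ψ g : ℝ → ℂ) (K : ℝ → ℝ → ℂ) (h : ℝ → ℝ)
    (hh_nonneg : ∀ y, 0 ≤ h y)
    (hh_int : IntegrableOn h (Set.Ici x₀))
    (hg : ∀ x, x₀ ≤ x → ‖g x‖ ≤ A)
    (hK : ∀ x y, x₀ ≤ x → x ≤ y → ‖K x y‖ ≤ h y)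
    (hψ_meas : Measurable ψ)
    (hψ_bdd : ∃ B, ∀ x, ‖ψ x‖ ≤ B)
    (heq : ∀ x, x₀ ≤ x → ψ x = g x + ∫ y in Set.Ioi x, K x y * ψ y) :
    ∀ x, x₀ ≤ x → ‖ψ x‖ ≤ A * Real.exp (∫ y in Set.Ioi x, h y) := by
  classical
  obtain ⟨B₀, hB₀⟩ := hψ_bdd
  set B := max B₀ 0 with hBdef
  have hB : ∀ y, ‖ψ y‖ ≤ B := fun y => (hB₀ y).trans (le_max_left _ _)
  have hBnn : (0:ℝ) ≤ B := le_max_right _ _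
  have hA : (0:ℝ) ≤ A := le_trans (norm_nonneg _) (hg x₀ le_rfl)
  set Hf := VolterraGronwallAux.Hfun x₀ h with hHf
  have hHnn : ∀ y, 0 ≤ Hf y := VolterraGronwallAux.H_nonneg hh_nonneg
  have hkey := VolterraGronwallAux.key hh_nonneg hh_int
  have hterm : ∀ (C : ℝ) (j : ℕ) (z : ℝ),
      (C / j !) * (Hf z ^ (j+1) / ((j:ℝ)+1)) = C * Hf z ^ (j+1) / ((j+1).factorial : ℝ) := by
    intro C j z
    rw [Nat.factorial_succ, div_mul_div_comm]
    push_cast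
    congr 1 <;> ring
  have main : ∀ n : ℕ, ∀ z, x₀ ≤ z → ‖ψ z‖ ≤
      (∑ j ∈ Finset.range n, A * Hf z ^ j / j !) + B * Hf z ^ n / n ! := by
    intro n
    induction n with
    | zero => intro z hz; simpa using hB z
    | succ n ih =>
      intro z hz
      have hw_int : IntegrableOn (fun y =>
          (∑ j ∈ Finset.range n, (A / j !) * (h y * Hf y ^ j))
            + (B / n !) * (h y * Hf y ^ n)) (Set.Ioi z) := by
        refine Integrable.add ?_ ?_
        · refine integrable_finset_sum _ fun j _ => ?_
          exact (VolterraGronwallAux.hHpow_int hh_nonneg hh_int hz j).const_mul _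
        · exact (VolterraGronwallAux.hHpow_int hh_nonneg hh_int hz n).const_mul _
      have hstep1 : ‖ψ z‖
          ≤ A + ∫ y in Set.Ioi z, ((∑ j ∈ Finset.range n, (A / j !) * (h y * Hf y ^ j))
              + (B / n !) * (h y * Hf y ^ n)) := by
        rw [heq z hz]
        refine (norm_add_le _ _).trans (add_le_add (hg z hz) ?_)
        refine (norm_integral_le_integral_norm _).trans ?_
        refine integral_mono_of_nonneg (Filter.Eventually.of_forall fun y => norm_nonneg _)
          hw_int ?_
        filter_upwards [ae_restrict_mem measurableSet_Ioi] with y hy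
        have hy' : z < y := hy
        have hy₀ : x₀ ≤ y := hz.trans (le_of_lt hy')
        have hb1 : ‖K z y * ψ y‖ ≤ h y *
            ((∑ j ∈ Finset.range n, A * Hf y ^ j / j !) + B * Hf y ^ n / n !) := by
          rw [norm_mul]
          exact mul_le_mul (hK z y hz (le_of_lt hy')) (ih y hy₀)
            (norm_nonneg _) (hh_nonneg y)
        refine hb1.trans (le_of_eq ?_)
        rw [mul_add, Finset.mul_sum]
        congr 1
        · exact Finset.sum_congr rfl fun j _ => by ring
        · ring
      have hint_val : (∫ y in Set.Ioi z, ((∑ j ∈ Finset.range n, (A / j !) * (h y * Hf y ^ j))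
              + (B / n !) * (h y * Hf y ^ n)))
          = (∑ j ∈ Finset.range n, A * Hf z ^ (j+1) / ((j+1).factorial : ℝ))
              + B * Hf z ^ (n+1) / ((n+1).factorial : ℝ) := by
        rw [integral_add (integrable_finset_sum _ fun j _ =>
            (VolterraGronwallAux.hHpow_int hh_nonneg hh_int hz j).const_mul _)
          ((VolterraGronwallAux.hHpow_int hh_nonneg hh_int hz n).const_mul _)]
        rw [integral_finset_sum _ fun j _ =>
            (VolterraGronwallAux.hHpow_int hh_nonneg hh_int hz j).const_mul _]
        congr 1
        · refine Finset.sum_congr rfl fun j _ => ?_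
          rw [integral_const_mul, hkey j z hz, hterm A j z]
        · rw [integral_const_mul, hkey n z hz, hterm B n z]
      have hsum : A + (∑ j ∈ Finset.range n, A * Hf z ^ (j+1) / ((j+1).factorial : ℝ))
          = ∑ j ∈ Finset.range (n+1), A * Hf z ^ j / j ! := by
        rw [Finset.sum_range_succ' (fun j => A * Hf z ^ j / (j ! : ℝ)) n]
        simp [add_comm]
      calc ‖ψ z‖
          ≤ A + ((∑ j ∈ Finset.range n, A * Hf z ^ (j+1) / ((j+1).factorial : ℝ))
              + B * Hf z ^ (n+1) / ((n+1).factorial : ℝ)) := by rw [← hint_val]; exact hstep1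
        _ = (∑ j ∈ Finset.range (n+1), A * Hf z ^ j / j !) + B * Hf z ^ (n+1) / ((n+1).factorial : ℝ) := by
            rw [← hsum]; ring
  intro x hx
  have hbound : ∀ n : ℕ, ‖ψ x‖
      ≤ A * Real.exp (Hf x) + B * (Hf x ^ n / n !) := by
    intro n
    refine (main n x hx).trans (add_le_add ?_ (le_of_eq (mul_div_assoc _ _ _)))
    have hfac : (∑ j ∈ Finset.range n, A * Hf x ^ j / j !)
        = A * ∑ j ∈ Finset.range n, Hf x ^ j / j ! := by
      rw [Finset.mul_sum]; exact Finset.sum_congr rfl fun j _ => by ring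
    rw [hfac]
    exact mul_le_mul_of_nonneg_left (Real.sum_le_exp_of_nonneg (hHnn x) n) hA
  have hlim : Filter.Tendsto (fun n : ℕ => A * Real.exp (Hf x) + B * (Hf x ^ n / n !))
      Filter.atTop (nhds (A * Real.exp (Hf x))) := by
    have h0 := (FloorSemiring.tendsto_pow_div_factorial_atTop (Hf x)).const_mul B
    simpa using Filter.Tendsto.add (tendsto_const_nhds (x := A * Real.exp (Hf x))) h0
  have := ge_of_tendsto' hlim hbound
  rwa [hHf, VolterraGronwallAux.H_eq hx] at this
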